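/- Consider an adaptive observation process over a finite alphabet Σ where, for each time t and history x^{(<t)}, the conditional laws P₀(·|x^{(<t)}) and P₁(·|x^{(<t)}) satisfy ∑_m |P₁(m|x^{(<t)}) - P₀(m|x^{(<t)})| ≤ ε and P_η(m|x^{(<t)}) ≥ δ whenever the two conditional probabilities of m differ (η ∈ {0,1}), with 10ε < δ. Then for any T, KL(P₀^{≤T}, P₁^{≤T}) ≤ T · 0.79 · ε²/δ. -/

import Mathlib

section aux

lemma log_upper {y : ℝ} (hy : 0 < y) : Real.log y ≤ 2 * (Real.sqrt y - 1) := by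
  have h1 : Real.log (Real.sqrt y) = Real.log y / 2 := Real.log_sqrt hy.le
  have h2 : Real.log (Real.sqrt y) ≤ Real.sqrt y - 1 :=
    Real.log_le_sub_one_of_pos (Real.sqrt_pos.mpr hy)
  linarith

lemma log_lower {y : ℝ} (hy : 0 < y) : 2 * (1 - 1 / Real.sqrt y) ≤ Real.log y := by
  have hs : 0 < Real.sqrt y := Real.sqrt_pos.mpr hy
  have h1 : Real.log (Real.sqrt y) = Real.log y / 2 := Real.log_sqrt hy.le
  have h2 : Real.log (Real.sqrt y)⁻¹ ≤ (Real.sqrt y)⁻¹ - 1 :=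
    Real.log_le_sub_one_of_pos (by positivity)
  rw [Real.log_inv] at h2
  have : 1 - 1/Real.sqrt y ≤ Real.log (Real.sqrt y) := by
    rw [one_div]; linarith
  linarith

lemma key_pointwise {x : ℝ} (h1 : 0.9 ≤ x) (h2 : x ≤ 1.1) :
    x * Real.log x ≤ (x - 1) + 0.547 * (x - 1) ^ 2 := by
  set F : ℝ → ℝ := fun x => (x - 1) + 0.547 * (x - 1) ^ 2 - x * Real.log x with hF
  have hx0 : (0:ℝ) < x := by linarith
  have hder : ∀ z : ℝ, 0 < z → HasDerivAt F (1.094 * (z - 1) - Real.log z) z := by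
    intro z hz
    have ha : HasDerivAt (fun w : ℝ => w - 1) 1 z := (hasDerivAt_id z).sub_const 1
    have hb : HasDerivAt (fun w : ℝ => (w - 1) ^ 2) (2 * (z - 1) ^ 1 * 1) z := ha.pow 2
    have hc : HasDerivAt (fun w : ℝ => 0.547 * (w - 1) ^ 2) (0.547 * (2 * (z - 1) ^ 1 * 1)) z :=
      hb.const_mul _
    have hd : HasDerivAt (fun w : ℝ => w * Real.log w) (1 * Real.log z + z * z⁻¹) z :=
      (hasDerivAt_id z).mul (Real.hasDerivAt_log hz.ne')
    have := (ha.add hc).sub hd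
    refine this.congr_deriv ?_
    rw [mul_inv_cancel₀ hz.ne']
    ring
  have hcont : ∀ s : Set ℝ, s ⊆ Set.Ioi (0:ℝ) → ContinuousOn F s := by
    intro s hs z hz
    exact ((hder z (hs hz)).continuousAt).continuousWithinAt
  have hdiff : ∀ s : Set ℝ, s ⊆ Set.Ioi (0:ℝ) → DifferentiableOn ℝ F s := by
    intro s hs z hz
    exact ((hder z (hs hz)).differentiableAt).differentiableWithinAt
  have hF1 : F 1 = 0 := by simp [hF]
  have hgoal : 0 ≤ F x := by
    rcases le_total x 1 with hx1 | hx1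
    · -- antitone on [0.9, 1]
      have anti : AntitoneOn F (Set.Icc 0.9 1) := by
        apply antitoneOn_of_deriv_nonpos (convex_Icc _ _)
        · exact hcont _ (fun z hz => by simp at hz ⊢; linarith [hz.1])
        · rw [interior_Icc]
          exact hdiff _ (fun z hz => by simp at hz ⊢; linarith [hz.1])
        · rw [interior_Icc]
          intro z hz
          rw [(hder z (by simp at hz; linarith [hz.1])).deriv]
          obtain ⟨hz1, hz2⟩ := hz
          have hzpos : (0:ℝ) < z := by linarith
          have hlow := log_lower hzpos
          set s := Real.sqrt z with hs
          have hspos : 0 < s := Real.sqrt_pos.mpr hzpos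
          have hs2 : s ^ 2 = z := Real.sq_sqrt hzpos.le
          have hs948 : 0.948 ≤ s := by nlinarith
          have hs1 : s ≤ 1 := by nlinarith
          have hkey : 1.094 * (z - 1) ≤ 2 * (1 - 1 / s) := by
            have h1s : 1 - 1/s = (s - 1)/s := by field_simp
            rw [h1s, mul_div_assoc', le_div_iff₀ hspos, ← hs2]
            nlinarith [mul_nonneg (show (0:ℝ) ≤ 1 - s by linarith)
              (show (0:ℝ) ≤ 1.094*s^2 + 1.094*s - 2 by nlinarith)]
          linarith
      have h01 : (0.9:ℝ) ≤ 1 := by norm_num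
      have := anti ⟨h1, hx1⟩ ⟨h01, le_refl 1⟩ hx1
      rw [hF1] at this; linarith
    · have mono : MonotoneOn F (Set.Icc 1 1.1) := by
        apply monotoneOn_of_deriv_nonneg (convex_Icc _ _)
        · exact hcont _ (fun z hz => by simp at hz ⊢; linarith [hz.1])
        · rw [interior_Icc]
          exact hdiff _ (fun z hz => by simp at hz ⊢; linarith [hz.1])
        · rw [interior_Icc]
          intro z hz
          obtain ⟨hz1, hz2⟩ := hz
          have hzpos : (0:ℝ) < z := by linarith
          rw [(hder z hzpos).deriv]
          have := Real.log_le_sub_one_of_pos hzpos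
          linarith
      have := mono ⟨le_refl 1, by norm_num⟩ ⟨hx1, h2⟩ hx1
      rw [hF1] at this; linarith
  simp only [hF] at hgoal
  linarith


variable {A : Type*} [Fintype A]


lemma step_nat (p r : A → ℝ) (ε δ : ℝ) (hε : 0 < ε) (hδ : 0 < δ) (hεδ : 10 * ε < δ)
    (hp : ∀ m, 0 < p m) (hr : ∀ m, 0 < r m)
    (hps : ∑ m, p m = 1) (hrs : ∑ m, r m = 1)
    (hl1 : ∑ m, |r m - p m| ≤ ε)
    (hdl : ∀ m, r m ≠ p m → δ ≤ p m ∧ δ ≤ r m) :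
    ∑ m, p m * Real.log (p m / r m) ≤ 0.547 * ε ^ 2 / δ := by
  have habs : ∀ m, |r m - p m| ≤ ε := by
    intro m
    calc |r m - p m| ≤ ∑ k, |r k - p k| :=
          Finset.single_le_sum (f := fun k => |r k - p k|)
            (fun k _ => abs_nonneg _) (Finset.mem_univ m)
    _ ≤ ε := hl1
  have hpoint : ∀ m, p m * Real.log (p m / r m)
      ≤ (p m - r m) + 0.547 * ((r m - p m) ^ 2 / δ) := by
    intro m
    by_cases hme : r m = p m
    · rw [hme]
      rw [div_self (hp m).ne', Real.log_one, mul_zero]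
      have : (0:ℝ) ≤ 0.547 * ((p m - p m)^2 / δ) := by positivity
      linarith
    · obtain ⟨hd1, hd2⟩ := hdl m hme
      have hrm := hr m
      have habsm := habs m
      have hb1 : 0.9 ≤ p m / r m := by
        rw [le_div_iff₀ hrm]
        have : r m - p m ≤ ε := (abs_le.mp habsm).2
        linarith
      have hb2 : p m / r m ≤ 1.1 := by
        rw [div_le_iff₀ hrm]
        have : -ε ≤ r m - p m := (abs_le.mp habsm).1
        linarith
      have hk := key_pointwise hb1 hb2
      have hmul := mul_le_mul_of_nonneg_left hk hrm.le
      have e1 : r m * (p m / r m * Real.log (p m / r m)) = p m * Real.log (p m / r m) := by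
        field_simp
      have e2 : r m * (p m / r m - 1 + 0.547 * (p m / r m - 1) ^ 2)
          = (p m - r m) + 0.547 * ((r m - p m) ^ 2 / r m) := by
        field_simp
        ring
      rw [e1, e2] at hmul
      have e3 : (r m - p m) ^ 2 / r m ≤ (r m - p m) ^ 2 / δ :=
        div_le_div_of_nonneg_left (by positivity) hδ hd2
      linarith
  calc ∑ m, p m * Real.log (p m / r m)
      ≤ ∑ m, ((p m - r m) + 0.547 * ((r m - p m) ^ 2 / δ)) :=
        Finset.sum_le_sum (fun m _ => hpoint m)
    _ = (∑ m, (p m - r m)) + 0.547 * ((∑ m, (r m - p m)^2) / δ) := by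
        rw [Finset.sum_add_distrib, ← Finset.mul_sum, ← Finset.sum_div]
    _ ≤ 0 + 0.547 * (ε^2 / δ) := by
        have h0 : ∑ m, (p m - r m) = 0 := by
          rw [Finset.sum_sub_distrib, hps, hrs, sub_self]
        have hsq : ∑ m, (r m - p m)^2 ≤ ε^2 := by
          calc ∑ m, (r m - p m)^2 = ∑ m, |r m - p m|^2 := by
                simp [sq_abs]
          _ ≤ (∑ m, |r m - p m|)^2 :=
                Finset.sum_sq_le_sq_sum_of_nonneg (fun m _ => abs_nonneg _)
          _ ≤ ε^2 := by
                apply pow_le_pow_left₀ (Finset.sum_nonneg fun m _ => abs_nonneg _) hl1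
        rw [h0]
        gcongr
    _ = 0.547 * ε^2 / δ := by ring


lemma step_logb (q : Bool → List A → A → ℝ)
    (ε δ : ℝ) (hε : 0 < ε) (hδ : 0 < δ) (hεδ : 10 * ε < δ)
    (hsum : ∀ η h, ∑ m, q η h m = 1)
    (hpos : ∀ η h m, 0 < q η h m)
    (hl1 : ∀ h : List A, ∑ m, |q true h m - q false h m| ≤ ε)
    (hδlow : ∀ (h : List A) m, q true h m ≠ q false h m →
      δ ≤ q false h m ∧ δ ≤ q true h m) (h : List A) :
    ∑ m, q false h m * Real.logb 2 (q false h m / q true h m) ≤ 0.79 * ε ^ 2 / δ := by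
  have hL : (0.6931471803 : ℝ) < Real.log 2 := Real.log_two_gt_d9
  have hL0 : (0:ℝ) < Real.log 2 := by linarith
  have hnat := step_nat (q false h) (q true h) ε δ hε hδ hεδ
    (hpos false h) (hpos true h) (hsum false h) (hsum true h) (hl1 h) (hδlow h)
  have ht : (0:ℝ) < ε ^ 2 / δ := by positivity
  calc ∑ m, q false h m * Real.logb 2 (q false h m / q true h m)
      = (∑ m, q false h m * Real.log (q false h m / q true h m)) / Real.log 2 := by
        rw [Finset.sum_div]
        exact Finset.sum_congr rfl fun m _ => by
          simp [Real.logb, mul_div_assoc]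
    _ ≤ (0.547 * ε ^ 2 / δ) / Real.log 2 := by gcongr
    _ ≤ 0.79 * ε ^ 2 / δ := by
        rw [div_le_iff₀ hL0]
        have h3 : 0.79 * (ε^2/δ) * 0.6931471803 ≤ 0.79 * (ε^2/δ) * Real.log 2 :=
          mul_le_mul_of_nonneg_left hL.le (by positivity)
        have e1 : 0.547 * ε^2/δ = 0.547 * (ε^2/δ) := by ring
        have e2 : 0.79 * ε^2/δ * Real.log 2 = 0.79 * (ε^2/δ) * Real.log 2 := by ring
        rw [e1, e2]
        set t := ε^2/δ
        linarith


end aux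

/-- Joint law of the first `T` observations of an adaptive process whose
conditional law of the next observation given history `h` under type `η` is `q η h`. -/
def jointLaw {A : Type*} (q : Bool → List A → A → ℝ) (T : ℕ)
    (η : Bool) (x : Fin T → A) : ℝ :=
  ∏ t : Fin T, q η ((List.ofFn x).take t.val) (x t)


section aux2
variable {A : Type*} [Fintype A]

lemma jointLaw_pos (q : Bool → List A → A → ℝ) (hpos : ∀ η h m, 0 < q η h m)
    (T : ℕ) (η : Bool) (x : Fin T → A) : 0 < jointLaw q T η x :=
  Finset.prod_pos fun t _ => hpos _ _ _

lemma ofFn_snoc {T : ℕ} (y : Fin T → A) (a : A) :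
    List.ofFn (Fin.snoc y a : Fin (T+1) → A) = List.ofFn y ++ [a] := by
  rw [List.ofFn_succ']
  simp [List.concat_eq_append]

lemma jointLaw_snoc (q : Bool → List A → A → ℝ) {T : ℕ} (η : Bool)
    (y : Fin T → A) (a : A) :
    jointLaw q (T+1) η (Fin.snoc y a) = jointLaw q T η y * q η (List.ofFn y) a := by
  unfold jointLaw
  rw [Fin.prod_univ_castSucc]
  congr 1
  · apply Finset.prod_congr rfl
    intro t _
    rw [Fin.snoc_castSucc, ofFn_snoc]
    congr 1
    rw [Fin.coe_castSucc, List.take_append_of_le_length (by simpa using t.isLt.le)]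
  · rw [Fin.snoc_last, ofFn_snoc]
    congr 1
    have : (Fin.last T).val = (List.ofFn y).length := by simp
    rw [this, List.take_left]

lemma sum_snoc {T : ℕ} (f : (Fin (T+1) → A) → ℝ) :
    ∑ x : Fin (T+1) → A, f x = ∑ y : Fin T → A, ∑ a : A, f (Fin.snoc y a) := by
  rw [← Equiv.sum_comp (Fin.snocEquiv (fun _ => A)) f, Fintype.sum_prod_type,
    Finset.sum_comm]
  rfl

lemma jointLaw_sum (q : Bool → List A → A → ℝ) (hsum : ∀ η h, ∑ m, q η h m = 1)
    (T : ℕ) (η : Bool) : ∑ x : Fin T → A, jointLaw q T η x = 1 := by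
  induction T with
  | zero => simp [jointLaw]
  | succ T ih =>
    rw [sum_snoc]
    calc ∑ y : Fin T → A, ∑ a : A, jointLaw q (T+1) η (Fin.snoc y a)
        = ∑ y : Fin T → A, jointLaw q T η y := by
          apply Finset.sum_congr rfl
          intro y _
          simp_rw [jointLaw_snoc, ← Finset.mul_sum, hsum, mul_one]
      _ = 1 := ih

end aux2

/-- Under the ACDT(ε,δ) assumptions with 10ε < δ, the base-2 KL divergence between
the joint laws of the first `T` observations is at most `T · 0.79 · ε²/δ`. -/
theorem stmt11 {A : Type*} [Fintype A] (q : Bool → List A → A → ℝ) (T : ℕ)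
    (ε δ : ℝ) (hε : 0 < ε) (hδ : 0 < δ) (hεδ : 10 * ε < δ)
    (hsum : ∀ η h, ∑ m, q η h m = 1)
    (hpos : ∀ η h m, 0 < q η h m)
    (hl1 : ∀ h : List A, ∑ m, |q true h m - q false h m| ≤ ε)
    (hδlow : ∀ (h : List A) m, q true h m ≠ q false h m →
      δ ≤ q false h m ∧ δ ≤ q true h m) :
    ∑ x : Fin T → A,
        jointLaw q T false x *
          Real.logb 2 (jointLaw q T false x / jointLaw q T true x)
      ≤ T * (0.79 * ε ^ 2 / δ) := by
  have hB : (0:ℝ) ≤ 0.79 * ε ^ 2 / δ := by positivity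
  induction T with
  | zero => simp [jointLaw]
  | succ T ih =>
    rw [sum_snoc]
    have hstep : ∀ y : Fin T → A,
        ∑ a : A, jointLaw q (T+1) false (Fin.snoc y a) *
            Real.logb 2 (jointLaw q (T+1) false (Fin.snoc y a) /
              jointLaw q (T+1) true (Fin.snoc y a))
        = jointLaw q T false y *
            Real.logb 2 (jointLaw q T false y / jointLaw q T true y)
          + jointLaw q T false y *
            ∑ a : A, q false (List.ofFn y) a *
              Real.logb 2 (q false (List.ofFn y) a / q true (List.ofFn y) a) := by
      intro y
      have hP0 := jointLaw_pos q hpos T false y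
      have hP1 := jointLaw_pos q hpos T true y
      have e : ∀ a : A,
          jointLaw q (T+1) false (Fin.snoc y a) *
            Real.logb 2 (jointLaw q (T+1) false (Fin.snoc y a) /
              jointLaw q (T+1) true (Fin.snoc y a))
          = jointLaw q T false y *
              Real.logb 2 (jointLaw q T false y / jointLaw q T true y) *
                q false (List.ofFn y) a
            + jointLaw q T false y *
              (q false (List.ofFn y) a *
                Real.logb 2 (q false (List.ofFn y) a / q true (List.ofFn y) a)) := by
        intro a
        rw [jointLaw_snoc, jointLaw_snoc]
        have hq0 := hpos false (List.ofFn y) a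
        have hq1 := hpos true (List.ofFn y) a
        have hsplit : (jointLaw q T false y * q false (List.ofFn y) a) /
            (jointLaw q T true y * q true (List.ofFn y) a)
            = (jointLaw q T false y / jointLaw q T true y) *
              (q false (List.ofFn y) a / q true (List.ofFn y) a) := by
          field_simp
        rw [hsplit, Real.logb_mul (by positivity) (by positivity)]
        ring
      rw [Finset.sum_congr rfl (fun a _ => e a), Finset.sum_add_distrib,
        ← Finset.mul_sum, ← Finset.mul_sum, hsum, mul_one]
    rw [Finset.sum_congr rfl (fun y _ => hstep y), Finset.sum_add_distrib]
    have h2 : ∑ y : Fin T → A, jointLaw q T false y *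
        (∑ a : A, q false (List.ofFn y) a *
          Real.logb 2 (q false (List.ofFn y) a / q true (List.ofFn y) a))
        ≤ 0.79 * ε ^ 2 / δ := by
      calc ∑ y : Fin T → A, jointLaw q T false y *
          (∑ a : A, q false (List.ofFn y) a *
            Real.logb 2 (q false (List.ofFn y) a / q true (List.ofFn y) a))
          ≤ ∑ y : Fin T → A, jointLaw q T false y * (0.79 * ε ^ 2 / δ) := by
            apply Finset.sum_le_sum
            intro y _
            exact mul_le_mul_of_nonneg_left
              (step_logb q ε δ hε hδ hεδ hsum hpos hl1 hδlow (List.ofFn y))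
              (jointLaw_pos q hpos T false y).le
        _ = 0.79 * ε ^ 2 / δ := by
            rw [← Finset.sum_mul, jointLaw_sum q hsum, one_mul]
    push_cast
    linarith
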